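/- The number of 321-avoiding permutations of {1,…,m} equals the Catalan number C_m = (1/(m+1))·binom(2m, m). -/

import Mathlib

/-- A permutation is 321-avoiding if no three indices `i < j < k` are completely reversed. -/
def Avoids321 {m : ℕ} (s : Equiv.Perm (Fin m)) : Prop :=
  ¬ ∃ i j k : Fin m, i < j ∧ j < k ∧ s k < s j ∧ s j < s i

open Finset

namespace Aux321


section rank
variable {α : Type*} [LinearOrder α] [DecidableEq α] {s : Finset α} {k : ℕ} (h : s.card = k)

lemma rank_lt (j : Fin k) : (s.filter (· < s.orderEmbOfFin h j)).card = j := by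
  have himg : s.filter (· < s.orderEmbOfFin h j)
      = (Finset.univ.filter (fun i : Fin k => i < j)).image (s.orderEmbOfFin h) := by
    ext x
    simp only [mem_filter, mem_image, mem_univ, true_and]
    constructor
    · rintro ⟨hx, hlt⟩
      have : x ∈ Set.range (s.orderEmbOfFin h) := by
        rw [Finset.range_orderEmbOfFin]; exact hx
      obtain ⟨i, rfl⟩ := this
      exact ⟨i, by rwa [← (s.orderEmbOfFin h).lt_iff_lt], rfl⟩
    · rintro ⟨i, hi, rfl⟩
      exact ⟨Finset.orderEmbOfFin_mem _ _ _, (s.orderEmbOfFin h).lt_iff_lt.2 hi⟩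
  rw [himg, Finset.card_image_of_injective _ (s.orderEmbOfFin h).injective]
  rw [show (Finset.univ.filter (fun i : Fin k => i < j)) = Finset.Iio j from by ext; simp,
    Fin.card_Iio]

lemma rank_le (j : Fin k) : (s.filter (· ≤ s.orderEmbOfFin h j)).card = j + 1 := by
  have himg : s.filter (· ≤ s.orderEmbOfFin h j)
      = (Finset.univ.filter (fun i : Fin k => i ≤ j)).image (s.orderEmbOfFin h) := by
    ext x
    simp only [mem_filter, mem_image, mem_univ, true_and]
    constructor
    · rintro ⟨hx, hle⟩
      have : x ∈ Set.range (s.orderEmbOfFin h) := by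
        rw [Finset.range_orderEmbOfFin]; exact hx
      obtain ⟨i, rfl⟩ := this
      exact ⟨i, by rwa [← (s.orderEmbOfFin h).le_iff_le], rfl⟩
    · rintro ⟨i, hi, rfl⟩
      exact ⟨Finset.orderEmbOfFin_mem _ _ _, (s.orderEmbOfFin h).le_iff_le.2 hi⟩
  rw [himg, Finset.card_image_of_injective _ (s.orderEmbOfFin h).injective]
  rw [show (Finset.univ.filter (fun i : Fin k => i ≤ j)) = Finset.Iic j from by ext; simp,
    Fin.card_Iic]

lemma emb_lt_of_rank {x : α} (j : Fin k) (hj : (j : ℕ) < (s.filter (· < x)).card) :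
    s.orderEmbOfFin h j < x := by
  by_contra hc
  push_neg at hc
  have hsub : s.filter (· < x) ⊆ s.filter (· < s.orderEmbOfFin h j) :=
    Finset.monotone_filter_right s (fun a _ ha => lt_of_lt_of_le ha hc)
  have := (Finset.card_le_card hsub).trans_lt (by rw [rank_lt h j]; exact hj)
  exact lt_irrefl _ this

lemma emb_le_of_rank {x : α} (j : Fin k) (hj : (j : ℕ) < (s.filter (· ≤ x)).card) :
    s.orderEmbOfFin h j ≤ x := by
  by_contra hc
  push_neg at hc
  have hsub : s.filter (· ≤ x) ⊆ s.filter (· < s.orderEmbOfFin h j) :=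
    Finset.monotone_filter_right s (fun a _ ha => lt_of_le_of_lt ha hc) 
  have := (Finset.card_le_card hsub).trans_lt (by rw [rank_lt h j]; exact hj)
  exact lt_irrefl _ this

end rank

section countmach

lemma filter_range_succ_card (p : ℕ → Prop) [DecidablePred p] (t : ℕ) :
    ((Finset.range (t+1)).filter p).card
      = ((Finset.range t).filter p).card + if p t then 1 else 0 := by
  rw [Finset.range_add_one, Finset.filter_insert]
  split_ifs with h
  · rw [Finset.card_insert_of_notMem (by simp)]
  · rw [Nat.add_zero]

lemma count_single (w : ℕ → DyckStep) (c : DyckStep) (x : ℕ) :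
    (List.map w [x]).count c = if w x = c then 1 else 0 := by
  by_cases h : w x = c <;> simp [h, List.count_singleton']

lemma count_map_range (w : ℕ → DyckStep) (c : DyckStep) (i : ℕ) :
    (List.map w (List.range i)).count c
      = ((Finset.range ((i+1)/2)).filter (fun t => w (2*t) = c)).card
      + ((Finset.range (i/2)).filter (fun t => w (2*t+1) = c)).card := by
  induction i with
  | zero => simp
  | succ i ih =>
    rw [List.range_succ, List.map_append, List.count_append, ih, count_single]
    rcases Nat.even_or_odd i with ⟨t, ht⟩ | ⟨t, ht⟩
    · have ht' : i = 2 * t := by omega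
      subst ht'
      have e1 : (2*t+1+1)/2 = t + 1 := by omega
      have e2 : (2*t+1)/2 = t := by omega
      have e3 : (2*t)/2 = t := by omega
      rw [e1, e2, e3, filter_range_succ_card]
      split_ifs <;> omega
    · have ht' : i = 2 * t + 1 := by omega
      subst ht'
      have e1 : (2*t+1+1)/2 = t + 1 := by omega
      have e2 : (2*t+1+1+1)/2 = t + 1 := by omega
      have e3 : (2*t+1)/2 = t := by omega
      rw [e1, e2, e3, filter_range_succ_card (fun u => w (2*u+1) = c)]
      split_ifs <;> omega

lemma take_map_range (w : ℕ → DyckStep) (i m : ℕ) (him : i ≤ m) :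
    (List.map w (List.range m)).take i = List.map w (List.range i) := by
  rw [← List.map_take, List.take_range, Nat.min_eq_left him]

end countmach

open DyckStep

section word
variable {n : ℕ}

/-- The Dyck-step sequence associated to a pair of finsets `A` (excedance positions)
and `B` (excedance values). -/
def wordOf (A B : Finset (Fin n)) : ℕ → DyckStep :=
  fun x => if h : x / 2 < n then
    (if x % 2 = 0 then (if (⟨x/2, h⟩ : Fin n) ∈ B then D else U)
     else (if (⟨x/2, h⟩ : Fin n) ∈ A then U else D))
  else U

lemma wordOf_even (A B : Finset (Fin n)) {t : ℕ} (ht : t < n) :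
    wordOf A B (2*t) = (if (⟨t, ht⟩ : Fin n) ∈ B then D else U) := by
  have h2 : 2*t/2 = t := by omega
  simp only [wordOf, h2, Nat.mul_mod_right, dif_pos ht]
  norm_num

lemma wordOf_odd (A B : Finset (Fin n)) {t : ℕ} (ht : t < n) :
    wordOf A B (2*t+1) = (if (⟨t, ht⟩ : Fin n) ∈ A then U else D) := by
  have h2 : (2*t+1)/2 = t := by omega
  have h3 : (2*t+1) % 2 = 1 := by omega
  simp only [wordOf, h2, h3, dif_pos ht, if_neg (by omega : ¬ (1:ℕ) = 0)]

lemma even_filter_D (A B : Finset (Fin n)) {u : ℕ} (hu : u ≤ n) :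
    ((Finset.range u).filter (fun t => wordOf A B (2*t) = D)).card
      = (B.filter (fun x : Fin n => (x:ℕ) < u)).card := by
  have himg : (Finset.range u).filter (fun t => wordOf A B (2*t) = D)
      = (B.filter (fun x : Fin n => (x:ℕ) < u)).image Fin.val := by
    ext x
    simp only [Finset.mem_filter, Finset.mem_range, Finset.mem_image]
    constructor
    · rintro ⟨hx, hw⟩
      have hxn : x < n := lt_of_lt_of_le hx hu
      rw [wordOf_even A B hxn] at hw
      refine ⟨⟨x, hxn⟩, ⟨?_, hx⟩, rfl⟩
      by_contra hB; rw [if_neg hB] at hw; exact absurd hw (by simp)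
    · rintro ⟨b, ⟨hb, hbu⟩, rfl⟩
      exact ⟨hbu, by rw [wordOf_even A B b.2]; simp [hb]⟩
  rw [himg, Finset.card_image_of_injective _ Fin.val_injective]

lemma odd_filter_U (A B : Finset (Fin n)) {u : ℕ} (hu : u ≤ n) :
    ((Finset.range u).filter (fun t => wordOf A B (2*t+1) = U)).card
      = (A.filter (fun x : Fin n => (x:ℕ) < u)).card := by
  have himg : (Finset.range u).filter (fun t => wordOf A B (2*t+1) = U)
      = (A.filter (fun x : Fin n => (x:ℕ) < u)).image Fin.val := by
    ext x
    simp only [Finset.mem_filter, Finset.mem_range, Finset.mem_image]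
    constructor
    · rintro ⟨hx, hw⟩
      have hxn : x < n := lt_of_lt_of_le hx hu
      rw [wordOf_odd A B hxn] at hw
      refine ⟨⟨x, hxn⟩, ⟨?_, hx⟩, rfl⟩
      by_contra hA; rw [if_neg hA] at hw; exact absurd hw (by simp)
    · rintro ⟨b, ⟨hb, hbu⟩, rfl⟩
      exact ⟨hbu, by rw [wordOf_odd A B b.2]; simp [hb]⟩
  rw [himg, Finset.card_image_of_injective _ Fin.val_injective]

lemma even_filter_U (A B : Finset (Fin n)) {u : ℕ} (hu : u ≤ n) :
    ((Finset.range u).filter (fun t => wordOf A B (2*t) = U)).card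
      = u - (B.filter (fun x : Fin n => (x:ℕ) < u)).card := by
  have h := Finset.card_filter_add_card_filter_not
    (s := Finset.range u) (p := fun t => wordOf A B (2*t) = D)
  rw [Finset.card_range] at h
  have he : (Finset.range u).filter (fun t => ¬ wordOf A B (2*t) = D)
      = (Finset.range u).filter (fun t => wordOf A B (2*t) = U) := by
    apply Finset.filter_congr; intro x hx
    rcases (wordOf A B (2*x)).dichotomy with h1 | h1 <;> simp [h1]
  rw [he] at h
  rw [← even_filter_D A B hu]
  omega

lemma odd_filter_D (A B : Finset (Fin n)) {u : ℕ} (hu : u ≤ n) :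
    ((Finset.range u).filter (fun t => wordOf A B (2*t+1) = D)).card
      = u - (A.filter (fun x : Fin n => (x:ℕ) < u)).card := by
  have h := Finset.card_filter_add_card_filter_not
    (s := Finset.range u) (p := fun t => wordOf A B (2*t+1) = U)
  rw [Finset.card_range] at h
  have he : (Finset.range u).filter (fun t => ¬ wordOf A B (2*t+1) = U)
      = (Finset.range u).filter (fun t => wordOf A B (2*t+1) = D) := by
    apply Finset.filter_congr; intro x hx
    rcases (wordOf A B (2*x+1)).dichotomy with h1 | h1 <;> simp [h1]
  rw [he] at h
  rw [← odd_filter_U A B hu]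
  omega

end word

section dyckOf
variable {n : ℕ} (A B : Finset (Fin n))

/-- `af A u` counts elements of `A` with value `< u`. -/
def af (u : ℕ) : ℕ := (A.filter (fun x : Fin n => (x:ℕ) < u)).card

lemma af_mono {u v : ℕ} (h : u ≤ v) : af A u ≤ af A v :=
  Finset.card_le_card (Finset.monotone_filter_right A (fun x _ hx => lt_of_lt_of_le hx h))

lemma af_le (u : ℕ) : af A u ≤ u := by
  classical
  calc af A u = ((A.filter (fun x : Fin n => (x:ℕ) < u)).image Fin.val).card :=
        (Finset.card_image_of_injective _ Fin.val_injective).symm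
    _ ≤ (Finset.range u).card := by
        apply Finset.card_le_card
        intro x hx
        simp only [Finset.mem_image, Finset.mem_filter] at hx
        obtain ⟨y, ⟨-, hy⟩, rfl⟩ := hx
        simpa using hy
    _ = u := Finset.card_range u

lemma af_top {u : ℕ} (h : n ≤ u) : af A u = A.card := by
  unfold af
  rw [Finset.filter_true_of_mem]
  intro x _
  exact lt_of_lt_of_le x.2 h

variable {A B} (hcard : B.card = A.card)
  (hdom : ∀ t : ℕ, t < n → af B (t+1) ≤ af A t)

include hcard hdom in
lemma bf_le_af : ∀ t : ℕ, af B t ≤ af A t := by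
  intro t
  rcases t with _ | u
  · simp [af]
  rcases le_or_gt (u+1) n with h | h
  · calc af B (u+1) ≤ af A u := hdom u (by omega)
      _ ≤ af A (u + 1) := af_mono A (by omega)
  · rw [af_top A h.le, af_top B h.le, hcard]

include hcard hdom in
lemma bf_succ_le_af : ∀ t : ℕ, af B (t+1) ≤ af A t := by
  intro t
  rcases lt_or_ge t n with h | h
  · exact hdom t h
  · rw [af_top A h, af_top B (by omega), hcard]

omit hdom hcard in
lemma dyck_count (c : DyckStep) (i : ℕ) (hi : i ≤ 2 * n) :
    ((List.map (wordOf A B) (List.range (2*n))).take i).count c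
      = (if c = D then af B ((i+1)/2) + (i/2 - af A (i/2))
         else ((i+1)/2 - af B ((i+1)/2)) + af A (i/2)) := by
  rw [take_map_range _ _ _ hi, count_map_range]
  have h1 : (i+1)/2 ≤ n := by omega
  have h2 : i/2 ≤ n := by omega
  rcases c.dichotomy with rfl | rfl
  · rw [if_neg (by simp), even_filter_U A B h1, odd_filter_U A B h2]
    rfl
  · rw [if_pos rfl, even_filter_D A B h1, odd_filter_D A B h2]
    rfl

include hcard hdom in
/-- The Dyck word associated to the pair `(A, B)`. -/
def dyckOf : DyckWord where
  toList := List.map (wordOf A B) (List.range (2*n))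
  count_U_eq_count_D := by
    have hU := dyck_count (A := A) (B := B) U (2*n) le_rfl
    have hD := dyck_count (A := A) (B := B) D (2*n) le_rfl
    rw [List.take_of_length_le (by simp)] at hU hD
    rw [hU, hD]
    have e1 : (2*n+1)/2 = n := by omega
    have e2 : (2*n)/2 = n := by omega
    rw [e1, e2, if_neg (by simp), if_pos rfl]
    have h1 := af_le A n
    have h2 := af_le B n
    have h3 : af B n = af A n := by rw [af_top A le_rfl, af_top B le_rfl, hcard]
    omega
  count_D_le_count_U i := by
    rcases le_or_gt i (2*n) with hi | hi
    · rw [dyck_count (A := A) (B := B) U i hi, dyck_count (A := A) (B := B) D i hi,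
        if_pos rfl, if_neg (by simp)]
      have h1 := af_le A (i/2)
      have h2 := af_le B ((i+1)/2)
      have h3 := bf_le_af hcard hdom (i/2)
      have h4 := bf_succ_le_af hcard hdom (i/2)
      have h5 : (i+1)/2 = i/2 ∨ (i+1)/2 = i/2 + 1 := by omega
      rcases h5 with h5 | h5 <;> rw [h5] <;> omega
    · rw [List.take_of_length_le (by simp; omega), ← List.take_of_length_le (le_refl
        (List.map (wordOf A B) (List.range (2*n))).length)]
      have hU := dyck_count (A := A) (B := B) U (2*n) le_rfl
      have hD := dyck_count (A := A) (B := B) D (2*n) le_rfl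
      rw [List.length_map, List.length_range]
      rw [List.take_of_length_le (by simp)] at hU hD ⊢
      rw [hU, hD]
      have e1 : (2*n+1)/2 = n := by omega
      have e2 : (2*n)/2 = n := by omega
      rw [e1, e2, if_pos rfl, if_neg (by simp)]
      have h1 := af_le A n
      have h2 := af_le B n
      have h3 : af B n = af A n := by rw [af_top A le_rfl, af_top B le_rfl, hcard]
      omega

include hcard hdom in
lemma dyckOf_semilength : (dyckOf hcard hdom).semilength = n := by
  have hU := dyck_count (A := A) (B := B) U (2*n) le_rfl
  rw [List.take_of_length_le (by simp)] at hU
  unfold DyckWord.semilength dyckOf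
  rw [hU]
  have e1 : (2*n+1)/2 = n := by omega
  have e2 : (2*n)/2 = n := by omega
  rw [e1, e2, if_neg (by simp)]
  have h1 := af_le A n
  have h3 : af B n = af A n := by rw [af_top A le_rfl, af_top B le_rfl, hcard]
  omega

include hcard hdom in
lemma dyckOf_toList : (dyckOf hcard hdom).toList = List.map (wordOf A B) (List.range (2*n)) := rfl

end dyckOf


section perm
variable {n : ℕ} (s : Equiv.Perm (Fin n))

/-- The set of excedance positions of `s`. -/
def excSet : Finset (Fin n) := Finset.univ.filter (fun i => i < s i)

/-- The set of excedance values of `s`. -/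
def valSet : Finset (Fin n) := (excSet s).image s

lemma card_valSet : (valSet s).card = (excSet s).card :=
  Finset.card_image_of_injective _ s.injective

lemma mem_valSet {x : Fin n} : x ∈ valSet s ↔ s.symm x < x := by
  unfold valSet excSet
  simp only [Finset.mem_image, Finset.mem_filter, Finset.mem_univ, true_and]
  constructor
  · rintro ⟨i, hi, rfl⟩; rwa [Equiv.symm_apply_apply]
  · intro h; exact ⟨s.symm x, by rwa [Equiv.apply_symm_apply], Equiv.apply_symm_apply _ _⟩

lemma perm_dom (t : ℕ) (ht : t < n) : af (valSet s) (t+1) ≤ af (excSet s) t := by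
  apply Finset.card_le_card_of_injOn (fun x => s.symm x)
  · intro x hx
    rw [Finset.mem_coe, Finset.mem_filter] at hx ⊢
    obtain ⟨hx1, hx2⟩ := hx
    rw [mem_valSet] at hx1
    refine ⟨?_, ?_⟩
    · unfold excSet
      rw [Finset.mem_filter]
      exact ⟨Finset.mem_univ _, by rwa [Equiv.apply_symm_apply]⟩
    · have : (s.symm x : ℕ) < (x : ℕ) := hx1
      show ((s.symm x : Fin n) : ℕ) < t
      omega
  · intro a _ b _ hab
    exact s.symm.injective hab

/-- the count of values below `v` under a permutation. -/
lemma card_filter_apply_lt (v : Fin n) :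
    (Finset.univ.filter (fun p => s p < v)).card = (v : ℕ) := by
  have himg : (Finset.univ.filter (fun p => s p < v)).image s = Finset.Iio v := by
    ext x
    simp only [Finset.mem_image, Finset.mem_filter, Finset.mem_univ, true_and, Finset.mem_Iio]
    constructor
    · rintro ⟨p, hp, rfl⟩; exact hp
    · intro h; exact ⟨s.symm x, by rwa [Equiv.apply_symm_apply], Equiv.apply_symm_apply _ _⟩
  rw [← Fin.card_Iio v, ← himg, Finset.card_image_of_injective _ s.injective]

lemma card_filter_lt_apply (v : Fin n) :
    (Finset.univ.filter (fun p => v < s p)).card = n - ((v : ℕ) + 1) := by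
  have h := Finset.card_filter_add_card_filter_not
    (s := (Finset.univ : Finset (Fin n))) (p := fun p => s p ≤ v)
  have h2 : (Finset.univ.filter (fun p => s p ≤ v)).card = (v : ℕ) + 1 := by
    have himg : (Finset.univ.filter (fun p => s p ≤ v)).image s = Finset.Iic v := by
      ext x
      simp only [Finset.mem_image, Finset.mem_filter, Finset.mem_univ, true_and, Finset.mem_Iic]
      constructor
      · rintro ⟨p, hp, rfl⟩; exact hp
      · intro h; exact ⟨s.symm x, by rwa [Equiv.apply_symm_apply], Equiv.apply_symm_apply _ _⟩
    rw [← Fin.card_Iic v, ← himg, Finset.card_image_of_injective _ s.injective]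
  have h3 : (Finset.univ.filter (fun p => ¬ s p ≤ v)) = (Finset.univ.filter (fun p => v < s p)) := by
    apply Finset.filter_congr; intro x _; simp
  rw [h3, h2, Finset.card_univ, Fintype.card_fin] at h
  omega

variable {s} (hs : Avoids321 s)

include hs in
lemma exc_strictMono : ∀ i ∈ excSet s, ∀ j ∈ excSet s, i < j → s i < s j := by
  intro i hi j hj hij
  unfold excSet at hi hj
  rw [Finset.mem_filter] at hi hj
  by_contra hc
  push_neg at hc
  have hne : s j ≠ s i := fun e => absurd (s.injective e) (by omega)
  have hji : s j < s i := lt_of_le_of_ne hc hne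
  -- count positions with value < s j
  set T := Finset.univ.filter (fun p => s p < s j) with hT
  have hTcard : T.card = ((s j : Fin n) : ℕ) := card_filter_apply_lt s (s j)
  have hTle : (T.filter (fun p => p ≤ j)).card ≤ (j : ℕ) + 1 - 2 := by
    have hsub : T.filter (fun p => p ≤ j) ⊆ (Finset.Iic j) \ {i, j} := by
      intro p hp
      rw [Finset.mem_filter, hT, Finset.mem_filter] at hp
      obtain ⟨⟨-, hp1⟩, hp2⟩ := hp
      rw [Finset.mem_sdiff, Finset.mem_Iic, Finset.mem_insert, Finset.mem_singleton]
      refine ⟨hp2, ?_⟩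
      rintro (rfl | rfl)
      · exact absurd hp1 (by omega)
      · exact lt_irrefl _ hp1
    calc (T.filter (fun p => p ≤ j)).card ≤ ((Finset.Iic j) \ {i, j}).card :=
          Finset.card_le_card hsub
      _ = (j : ℕ) + 1 - 2 := by
          rw [Finset.card_sdiff_of_subset (by
            intro x hx
            rw [Finset.mem_insert, Finset.mem_singleton] at hx
            rw [Finset.mem_Iic]
            rcases hx with rfl | rfl
            · exact hij.le
            · exact le_rfl), Fin.card_Iic, Finset.card_insert_of_notMem (by
            rw [Finset.mem_singleton]; exact fun e => absurd e (by omega)),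
            Finset.card_singleton]
  have hsplit := Finset.card_filter_add_card_filter_not
    (s := T) (p := fun p => p ≤ j)
  have hgt : (T.filter (fun p => ¬ p ≤ j)).Nonempty := by
    rw [← Finset.card_pos]
    have hjsj : (j : ℕ) < ((s j : Fin n) : ℕ) := hj.2
    omega
  obtain ⟨k, hk⟩ := hgt
  rw [Finset.mem_filter, hT, Finset.mem_filter] at hk
  obtain ⟨⟨-, hk1⟩, hk2⟩ := hk
  exact hs ⟨i, j, k, hij, by omega, hk1, hji⟩

include hs in
lemma nonexc_strictMono : ∀ i ∉ excSet s, ∀ j ∉ excSet s, i < j → s i < s j := by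
  intro i hi j hj hij
  unfold excSet at hi hj
  rw [Finset.mem_filter] at hi hj
  push_neg at hi hj
  have hi' : s i ≤ i := hi (Finset.mem_univ _)
  have hj' : s j ≤ j := hj (Finset.mem_univ _)
  by_contra hc
  push_neg at hc
  have hne : s j ≠ s i := fun e => absurd (s.injective e) (by omega)
  have hji : s j < s i := lt_of_le_of_ne hc hne
  set T := Finset.univ.filter (fun p => s i < s p) with hT
  have hTcard : T.card = n - (((s i : Fin n) : ℕ) + 1) := card_filter_lt_apply s (s i)
  have hTge : (T.filter (fun p => i ≤ p)).card ≤ n - (i : ℕ) - 2 := by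
    have hsub : T.filter (fun p => i ≤ p) ⊆ (Finset.Ici i) \ {i, j} := by
      intro p hp
      rw [Finset.mem_filter, hT, Finset.mem_filter] at hp
      obtain ⟨⟨-, hp1⟩, hp2⟩ := hp
      rw [Finset.mem_sdiff, Finset.mem_Ici, Finset.mem_insert, Finset.mem_singleton]
      refine ⟨hp2, ?_⟩
      rintro (rfl | rfl)
      · exact lt_irrefl _ hp1
      · exact absurd hp1 (by omega)
    calc (T.filter (fun p => i ≤ p)).card ≤ ((Finset.Ici i) \ {i, j}).card :=
          Finset.card_le_card hsub
      _ = n - (i : ℕ) - 2 := by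
          rw [Finset.card_sdiff_of_subset (by
            intro x hx
            rw [Finset.mem_insert, Finset.mem_singleton] at hx
            rw [Finset.mem_Ici]
            rcases hx with rfl | rfl
            · exact le_rfl
            · exact hij.le), Fin.card_Ici, Finset.card_insert_of_notMem (by
            rw [Finset.mem_singleton]; exact fun e => absurd e (by omega)),
            Finset.card_singleton]
  have hsplit := Finset.card_filter_add_card_filter_not
    (s := T) (p := fun p => i ≤ p)
  have hlt : (T.filter (fun p => ¬ i ≤ p)).Nonempty := by
    rw [← Finset.card_pos]
    have hsii : ((s i : Fin n) : ℕ) ≤ (i : ℕ) := hi'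
    have hin : (i : ℕ) < n := i.2
    have hjn : (j : ℕ) < n := j.2
    have hijn : (i : ℕ) < (j : ℕ) := hij
    omega
  obtain ⟨r, hr⟩ := hlt
  rw [Finset.mem_filter, hT, Finset.mem_filter] at hr
  obtain ⟨⟨-, hr1⟩, hr2⟩ := hr
  exact hs ⟨r, i, j, by omega, hij, hji, hr1⟩

end perm

section determine
variable {n : ℕ}

lemma eqOn_of_strictMonoOn {A B : Finset (Fin n)} (hB : B.card = A.card)
    (g g' : Fin n → Fin n)
    (hg : ∀ i ∈ A, ∀ j ∈ A, i < j → g i < g j)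
    (hg' : ∀ i ∈ A, ∀ j ∈ A, i < j → g' i < g' j)
    (hgB : ∀ i ∈ A, g i ∈ B) (hg'B : ∀ i ∈ A, g' i ∈ B) :
    ∀ i ∈ A, g i = g' i := by
  have key : ∀ (f : Fin n → Fin n), (∀ i ∈ A, ∀ j ∈ A, i < j → f i < f j) →
      (∀ i ∈ A, f i ∈ B) →
      (fun x : Fin A.card => f (A.orderEmbOfFin rfl x)) = B.orderEmbOfFin hB := by
    intro f hmono hmem
    apply Finset.orderEmbOfFin_unique
    · intro x; exact hmem _ (Finset.orderEmbOfFin_mem _ _ _)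
    · intro x y hxy
      exact hmono _ (Finset.orderEmbOfFin_mem _ _ _) _ (Finset.orderEmbOfFin_mem _ _ _)
        ((A.orderEmbOfFin rfl).strictMono hxy)
  have h1 := key g hg hgB
  have h2 := key g' hg' hg'B
  intro i hi
  have : i ∈ Set.range (A.orderEmbOfFin rfl) := by rw [Finset.range_orderEmbOfFin]; exact hi
  obtain ⟨x, rfl⟩ := this
  calc g (A.orderEmbOfFin rfl x) = B.orderEmbOfFin hB x := congrFun h1 x
    _ = g' (A.orderEmbOfFin rfl x) := (congrFun h2 x).symm

lemma image_equiv_mem (s : Equiv.Perm (Fin n)) (C : Finset (Fin n)) {x : Fin n} :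
    x ∈ C.image s ↔ s.symm x ∈ C := by
  simp only [Finset.mem_image]
  constructor
  · rintro ⟨c, hc, rfl⟩; rwa [Equiv.symm_apply_apply]
  · intro h; exact ⟨s.symm x, h, Equiv.apply_symm_apply _ _⟩

lemma image_compl (s : Equiv.Perm (Fin n)) (C : Finset (Fin n)) :
    (Finset.univ \ C).image s = Finset.univ \ (C.image s) := by
  ext x
  rw [image_equiv_mem, Finset.mem_sdiff, Finset.mem_sdiff, image_equiv_mem]
  simp

lemma perm_eq_of_sets {s s' : Equiv.Perm (Fin n)} (hs : Avoids321 s) (hs' : Avoids321 s')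
    (hA : excSet s = excSet s') (hB : valSet s = valSet s') : s = s' := by
  have hc1 : (valSet s).card = (excSet s).card := card_valSet s
  have hon : ∀ i ∈ excSet s, s i = s' i := by
    apply eqOn_of_strictMonoOn hc1 s s' (exc_strictMono hs)
    · intro i hi j hj hij
      exact exc_strictMono hs' i (hA ▸ hi) j (hA ▸ hj) hij
    · intro i hi; exact Finset.mem_image_of_mem s hi
    · intro i hi
      rw [hB]
      exact Finset.mem_image_of_mem s' (hA ▸ hi)
  have hc2 : (Finset.univ \ valSet s).card = (Finset.univ \ excSet s).card := by
    rw [Finset.card_sdiff_of_subset (Finset.subset_univ _), Finset.card_sdiff_of_subset (Finset.subset_univ _), hc1]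
  have honC : ∀ i ∈ Finset.univ \ excSet s, s i = s' i := by
    apply eqOn_of_strictMonoOn hc2 s s'
    · intro i hi j hj hij
      rw [Finset.mem_sdiff] at hi hj
      exact nonexc_strictMono hs i hi.2 j hj.2 hij
    · intro i hi j hj hij
      rw [Finset.mem_sdiff, hA] at hi hj
      exact nonexc_strictMono hs' i hi.2 j hj.2 hij
    · intro i hi
      have : s i ∈ (Finset.univ \ excSet s).image s := Finset.mem_image_of_mem s hi
      rwa [image_compl] at this
    · intro i hi
      have : s' i ∈ (Finset.univ \ excSet s').image s' := Finset.mem_image_of_mem s' (hA ▸ hi)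
      rw [image_compl] at this
      have he : Finset.image (⇑s') (excSet s') = valSet s := by rw [hB]; rfl
      rwa [he] at this
  apply Equiv.ext
  intro i
  by_cases hi : i ∈ excSet s
  · exact hon i hi
  · exact honC i (by rw [Finset.mem_sdiff]; exact ⟨Finset.mem_univ _, hi⟩)

end determine

section decode
variable {n : ℕ} {A B : Finset (Fin n)}

lemma card_compl_eq (hcard : B.card = A.card) :
    (Finset.univ \ B).card = (Finset.univ \ A).card := by
  rw [Finset.card_sdiff_of_subset (Finset.subset_univ _), Finset.card_sdiff_of_subset (Finset.subset_univ _), hcard]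

/-- The permutation built from excedance positions `A` and values `B`. -/
def permOf (hcard : B.card = A.card) : Equiv.Perm (Fin n) :=
  ((Equiv.sumCompl (· ∈ A)).symm.trans
    ((Equiv.sumCongr
      ((A.orderIsoOfFin rfl).symm.trans (B.orderIsoOfFin hcard)).toEquiv
      ((Equiv.subtypeEquivRight (fun x => by simp)).trans
        ((((Finset.univ \ A).orderIsoOfFin rfl).symm.trans
            ((Finset.univ \ B).orderIsoOfFin (card_compl_eq hcard))).toEquiv.trans
          (Equiv.subtypeEquivRight (fun x => by simp))))).trans
      (Equiv.sumCompl (· ∈ B))))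

lemma permOf_apply_of_mem (hcard : B.card = A.card) {i : Fin n} (hi : i ∈ A) :
    permOf hcard i = ↑(B.orderIsoOfFin hcard ((A.orderIsoOfFin rfl).symm ⟨i, hi⟩)) := by
  unfold permOf
  simp [Equiv.sumCompl_symm_apply_of_pos hi]

lemma permOf_apply_of_not_mem (hcard : B.card = A.card) {i : Fin n} (hi : ¬ i ∈ A) :
    permOf hcard i = ↑((Finset.univ \ B).orderIsoOfFin (card_compl_eq hcard)
      (((Finset.univ \ A).orderIsoOfFin rfl).symm
        ⟨i, by rw [Finset.mem_sdiff]; exact ⟨Finset.mem_univ _, hi⟩⟩)) := by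
  unfold permOf
  simp [Equiv.sumCompl_symm_apply_of_neg hi]
  rfl

lemma permOf_emb (hcard : B.card = A.card) (x : Fin A.card) :
    permOf hcard (A.orderEmbOfFin rfl x) = B.orderEmbOfFin hcard x := by
  have hi : A.orderEmbOfFin rfl x ∈ A := Finset.orderEmbOfFin_mem _ _ _
  rw [permOf_apply_of_mem hcard hi]
  have e : ((A.orderIsoOfFin rfl).symm ⟨A.orderEmbOfFin rfl x, hi⟩) = x :=
    (A.orderIsoOfFin rfl).symm_apply_eq.mpr
      (Subtype.ext (Finset.coe_orderIsoOfFin_apply A rfl x).symm)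
  rw [e]
  exact Finset.coe_orderIsoOfFin_apply B hcard x

lemma permOf_embC (hcard : B.card = A.card) (x : Fin (Finset.univ \ A).card) :
    permOf hcard ((Finset.univ \ A).orderEmbOfFin rfl x)
      = (Finset.univ \ B).orderEmbOfFin (card_compl_eq hcard) x := by
  have hi : (Finset.univ \ A).orderEmbOfFin rfl x ∈ Finset.univ \ A :=
    Finset.orderEmbOfFin_mem _ _ _
  have hi' : ¬ (Finset.univ \ A).orderEmbOfFin rfl x ∈ A := by
    rw [Finset.mem_sdiff] at hi; exact hi.2
  rw [permOf_apply_of_not_mem hcard hi']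
  have e : (((Finset.univ \ A).orderIsoOfFin rfl).symm
      ⟨(Finset.univ \ A).orderEmbOfFin rfl x,
        by rw [Finset.mem_sdiff]; exact ⟨Finset.mem_univ _, hi'⟩⟩) = x :=
    ((Finset.univ \ A).orderIsoOfFin rfl).symm_apply_eq.mpr
      (Subtype.ext (Finset.coe_orderIsoOfFin_apply _ rfl x).symm)
  rw [e]
  exact Finset.coe_orderIsoOfFin_apply _ _ x

end decode

section decode2
variable {n : ℕ} {A B : Finset (Fin n)}

lemma filter_le_eq_af (C : Finset (Fin n)) (v : Fin n) :
    (C.filter (· ≤ v)).card = af C ((v:ℕ) + 1) := by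
  unfold af
  congr 1
  apply Finset.filter_congr
  intro x _
  rw [Fin.le_def]
  omega

lemma filter_lt_eq_af (C : Finset (Fin n)) (v : Fin n) :
    (C.filter (· < v)).card = af C (v:ℕ) := by
  unfold af
  congr 1

lemma compl_split (C : Finset (Fin n)) (v : Fin n) :
    (C.filter (· ≤ v)).card + ((Finset.univ \ C).filter (· ≤ v)).card = (v:ℕ) + 1 := by
  classical
  have hu : C ∪ (Finset.univ \ C) = Finset.univ := Finset.union_sdiff_of_subset (Finset.subset_univ C)
  have hdisj : Disjoint (C.filter (· ≤ v)) ((Finset.univ \ C).filter (· ≤ v)) :=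
    Finset.disjoint_filter_filter Finset.disjoint_sdiff
  rw [← Finset.card_union_of_disjoint hdisj, ← Finset.filter_union, hu]
  rw [show Finset.univ.filter (· ≤ v) = Finset.Iic v from by ext; simp, Fin.card_Iic]

variable (hcard : B.card = A.card) (hdom : ∀ t : ℕ, t < n → af B (t+1) ≤ af A t)

include hdom in
lemma dom_emb (x : Fin A.card) :
    A.orderEmbOfFin rfl x < B.orderEmbOfFin hcard x := by
  set β := B.orderEmbOfFin hcard x with hβ
  have h1 : (B.filter (· ≤ β)).card = (x:ℕ) + 1 := rank_le hcard x
  rw [filter_le_eq_af] at h1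
  have h3 : af B ((β:ℕ) + 1) ≤ af A (β:ℕ) := hdom (β:ℕ) β.2
  apply emb_lt_of_rank rfl x
  rw [filter_lt_eq_af]
  omega

include hcard hdom in
lemma dom_embC (x : Fin (Finset.univ \ A).card) :
    (Finset.univ \ B).orderEmbOfFin (card_compl_eq hcard) x
      ≤ (Finset.univ \ A).orderEmbOfFin rfl x := by
  set π := (Finset.univ \ A).orderEmbOfFin rfl x with hπ
  have h1 : ((Finset.univ \ A).filter (· ≤ π)).card = (x:ℕ) + 1 := rank_le rfl x
  have h2 := compl_split A π
  have h3 := compl_split B π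
  have h4 : af B ((π:ℕ)+1) ≤ af A ((π:ℕ)+1) := bf_le_af hcard hdom _
  rw [filter_le_eq_af] at h2 h3
  apply emb_le_of_rank (card_compl_eq hcard) x
  omega

lemma permOf_mono_mem : ∀ p ∈ A, ∀ q ∈ A, p < q → permOf hcard p < permOf hcard q := by
  intro p hp q hq hpq
  have hp' : p ∈ Set.range (A.orderEmbOfFin rfl) := by rw [Finset.range_orderEmbOfFin]; exact hp
  have hq' : q ∈ Set.range (A.orderEmbOfFin rfl) := by rw [Finset.range_orderEmbOfFin]; exact hq
  obtain ⟨x, rfl⟩ := hp'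
  obtain ⟨y, rfl⟩ := hq'
  rw [permOf_emb, permOf_emb]
  exact (B.orderEmbOfFin hcard).strictMono ((A.orderEmbOfFin rfl).lt_iff_lt.mp hpq)

lemma permOf_mono_not_mem : ∀ p, ¬ p ∈ A → ∀ q, ¬ q ∈ A → p < q →
    permOf hcard p < permOf hcard q := by
  intro p hp q hq hpq
  have hp2 : p ∈ Finset.univ \ A := by rw [Finset.mem_sdiff]; exact ⟨Finset.mem_univ _, hp⟩
  have hq2 : q ∈ Finset.univ \ A := by rw [Finset.mem_sdiff]; exact ⟨Finset.mem_univ _, hq⟩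
  have hp' : p ∈ Set.range ((Finset.univ \ A).orderEmbOfFin rfl) := by
    rw [Finset.range_orderEmbOfFin]; exact hp2
  have hq' : q ∈ Set.range ((Finset.univ \ A).orderEmbOfFin rfl) := by
    rw [Finset.range_orderEmbOfFin]; exact hq2
  obtain ⟨x, rfl⟩ := hp'
  obtain ⟨y, rfl⟩ := hq'
  rw [permOf_embC, permOf_embC]
  exact ((Finset.univ \ B).orderEmbOfFin _).strictMono
    (((Finset.univ \ A).orderEmbOfFin rfl).lt_iff_lt.mp hpq)

include hdom in
lemma excSet_permOf : excSet (permOf hcard) = A := by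
  ext i
  unfold excSet
  rw [Finset.mem_filter]
  constructor
  · rintro ⟨-, hlt⟩
    by_contra hi
    have hi2 : i ∈ Finset.univ \ A := by rw [Finset.mem_sdiff]; exact ⟨Finset.mem_univ _, hi⟩
    have : i ∈ Set.range ((Finset.univ \ A).orderEmbOfFin rfl) := by
      rw [Finset.range_orderEmbOfFin]; exact hi2
    obtain ⟨x, rfl⟩ := this
    rw [permOf_embC] at hlt
    exact absurd (dom_embC hcard hdom x) (by omega)
  · intro hi
    refine ⟨Finset.mem_univ _, ?_⟩
    have : i ∈ Set.range (A.orderEmbOfFin rfl) := by rw [Finset.range_orderEmbOfFin]; exact hi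
    obtain ⟨x, rfl⟩ := this
    rw [permOf_emb]
    exact dom_emb hcard hdom x

include hdom in
lemma valSet_permOf : valSet (permOf hcard) = B := by
  unfold valSet
  rw [excSet_permOf hcard hdom]
  have hsub : B ⊆ A.image (permOf hcard) := by
    intro b hb
    have : b ∈ Set.range (B.orderEmbOfFin hcard) := by rw [Finset.range_orderEmbOfFin]; exact hb
    obtain ⟨x, rfl⟩ := this
    rw [← permOf_emb hcard x]
    exact Finset.mem_image_of_mem _ (Finset.orderEmbOfFin_mem _ _ _)
  have hcards : (A.image (permOf hcard)).card ≤ B.card := by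
    rw [Finset.card_image_of_injective _ (permOf hcard).injective, hcard]
  exact (Finset.eq_of_subset_of_card_le hsub hcards).symm

lemma avoids_permOf : Avoids321 (permOf hcard) := by
  rintro ⟨i, j, k, hij, hjk, h1, h2⟩
  by_cases hi : i ∈ A <;> by_cases hj : j ∈ A <;> by_cases hk : k ∈ A
  · exact absurd (permOf_mono_mem hcard i hi j hj hij) (by omega)
  · exact absurd (permOf_mono_mem hcard i hi j hj hij) (by omega)
  · exact absurd (permOf_mono_mem hcard i hi k hk (hij.trans hjk))
      (by have := h1.trans h2; omega)
  · exact absurd (permOf_mono_not_mem hcard j hj k hk hjk) (by omega)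
  · exact absurd (permOf_mono_mem hcard j hj k hk hjk) (by omega)
  · exact absurd (permOf_mono_not_mem hcard i hi k hk (hij.trans hjk))
      (by have := h1.trans h2; omega)
  · exact absurd (permOf_mono_not_mem hcard i hi j hj hij) (by omega)
  · exact absurd (permOf_mono_not_mem hcard i hi j hj hij) (by omega)

end decode2

section glue
variable {n : ℕ}

lemma word_list_inj {A B A' B' : Finset (Fin n)}
    (h : List.map (wordOf A B) (List.range (2*n)) = List.map (wordOf A' B') (List.range (2*n))) :
    A = A' ∧ B = B' := by
  have hw : ∀ x, x < 2*n → wordOf A B x = wordOf A' B' x := by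
    intro x hx
    have h1 : (List.map (wordOf A B) (List.range (2*n)))[x]?
        = (List.map (wordOf A' B') (List.range (2*n)))[x]? := by rw [h]
    rw [List.getElem?_map, List.getElem?_map, List.getElem?_range hx] at h1
    simpa using h1
  constructor
  · ext t
    have := hw (2*(t:ℕ)+1) (by omega)
    rw [wordOf_odd A B t.2, wordOf_odd A' B' t.2] at this
    by_cases h1 : t ∈ A <;> by_cases h2 : t ∈ A' <;>
      simp only [if_pos, if_neg, h1, h2, if_true, if_false] at this ⊢ <;> simp_all
  · ext t
    have := hw (2*(t:ℕ)) (by omega)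
    rw [wordOf_even A B t.2, wordOf_even A' B' t.2] at this
    by_cases h1 : t ∈ B <;> by_cases h2 : t ∈ B' <;>
      simp only [if_pos, if_neg, h1, h2, if_true, if_false] at this ⊢ <;> simp_all

/-- positions extracted from a Dyck word. -/
def Adef (p : DyckWord) : Finset (Fin n) :=
  Finset.univ.filter (fun t : Fin n => p.toList.getD (2*(t:ℕ)+1) D = U)

/-- values extracted from a Dyck word. -/
def Bdef (p : DyckWord) : Finset (Fin n) :=
  Finset.univ.filter (fun t : Fin n => p.toList.getD (2*(t:ℕ)) U = D)

variable (p : DyckWord) (hp : p.semilength = n)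

include hp in
lemma decode_length : p.toList.length = 2 * n := by
  rw [← p.two_mul_semilength_eq_length, hp]

include hp in
lemma decode_toList :
    p.toList = List.map (wordOf (Adef p (n := n)) (Bdef p (n := n))) (List.range (2*n)) := by
  apply List.ext_getElem
  · simp [decode_length p hp]
  · intro x hx1 hx2
    have hx : x < 2*n := by rwa [decode_length p hp] at hx1
    rw [List.getElem_map, List.getElem_range]
    rcases Nat.even_or_odd x with ⟨t, ht⟩ | ⟨t, ht⟩
    · have ht' : x = 2*t := by omega
      subst ht'
      have htn : t < n := by omega
      rw [wordOf_even _ _ htn]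
      have hgd : p.toList.getD (2*t) U = p.toList[2*t] := List.getD_eq_getElem _ _ hx1
      by_cases hB : (⟨t, htn⟩ : Fin n) ∈ Bdef p
      · rw [if_pos hB]
        unfold Bdef at hB
        rw [Finset.mem_filter] at hB
        rw [← hgd]; exact hB.2
      · rw [if_neg hB]
        unfold Bdef at hB
        rw [Finset.mem_filter] at hB
        push_neg at hB
        have := hB (Finset.mem_univ _)
        rw [hgd] at this
        exact (p.toList[2*t]'hx1).dichotomy.resolve_right (fun hh => this (by rw [hh]))
    · have ht' : x = 2*t+1 := by omega
      subst ht'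
      have htn : t < n := by omega
      rw [wordOf_odd _ _ htn]
      have hgd : p.toList.getD (2*t+1) D = p.toList[2*t+1] := List.getD_eq_getElem _ _ hx1
      by_cases hA : (⟨t, htn⟩ : Fin n) ∈ Adef p
      · rw [if_pos hA]
        unfold Adef at hA
        rw [Finset.mem_filter] at hA
        rw [← hgd]; exact hA.2
      · rw [if_neg hA]
        unfold Adef at hA
        rw [Finset.mem_filter] at hA
        push_neg at hA
        have := hA (Finset.mem_univ _)
        rw [hgd] at this
        exact (p.toList[2*t+1]'hx1).dichotomy.resolve_left (fun hh => this (by rw [hh]))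

include hp in
lemma decode_card : (Bdef p (n := n)).card = (Adef p (n := n)).card := by
  have hb := p.count_U_eq_count_D
  rw [decode_toList p hp] at hb
  have hU := dyck_count (A := Adef p) (B := Bdef p) U (2*n) le_rfl
  have hD := dyck_count (A := Adef p) (B := Bdef p) D (2*n) le_rfl
  rw [List.take_of_length_le (by simp)] at hU hD
  rw [hU, hD] at hb
  have e1 : (2*n+1)/2 = n := by omega
  have e2 : (2*n)/2 = n := by omega
  rw [e1, e2, if_neg (by simp), if_pos rfl] at hb
  have h1 := af_le (Adef p (n := n)) n
  have h2 := af_le (Bdef p (n := n)) n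
  have h3 := af_top (Adef p (n := n)) (le_refl n)
  have h4 := af_top (Bdef p (n := n)) (le_refl n)
  omega

include hp in
lemma decode_dom : ∀ t : ℕ, t < n → af (Bdef p (n := n)) (t+1) ≤ af (Adef p (n := n)) t := by
  intro t ht
  have hb := p.count_D_le_count_U (2*t+1)
  rw [decode_toList p hp] at hb
  have hU := dyck_count (A := Adef p (n := n)) (B := Bdef p (n := n)) U (2*t+1) (by omega)
  have hD := dyck_count (A := Adef p (n := n)) (B := Bdef p (n := n)) D (2*t+1) (by omega)
  rw [hU, hD] at hb
  have e1 : (2*t+1+1)/2 = t+1 := by omega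
  have e2 : (2*t+1)/2 = t := by omega
  rw [e1, e2, if_pos rfl, if_neg (by simp)] at hb
  have h1 := af_le (Adef p (n := n)) t
  have h2 := af_le (Bdef p (n := n)) (t+1)
  omega

end glue

end Aux321

open Aux321 in
theorem stmt12 (m : ℕ) :
    {s : Equiv.Perm (Fin m) | Avoids321 s}.ncard
      = Nat.choose (2 * m) m / (m + 1) := by
  classical
  have hFinj : Function.Injective
      (fun s : {s : Equiv.Perm (Fin m) // Avoids321 s} =>
        (⟨dyckOf (card_valSet s.1) (perm_dom s.1),
          dyckOf_semilength (card_valSet s.1) (perm_dom s.1)⟩ :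
          {p : DyckWord // p.semilength = m})) := by
    intro s s' h
    have hl : (dyckOf (card_valSet s.1) (perm_dom s.1)).toList
        = (dyckOf (card_valSet s'.1) (perm_dom s'.1)).toList := by
      rw [Subtype.mk.injEq] at h
      rw [h]
    rw [dyckOf_toList, dyckOf_toList] at hl
    obtain ⟨hA, hB⟩ := word_list_inj hl
    exact Subtype.ext (perm_eq_of_sets s.2 s'.2 hA hB)
  have hGinj : Function.Injective
      (fun p : {p : DyckWord // p.semilength = m} =>
        (⟨permOf (decode_card p.1 p.2), avoids_permOf (decode_card p.1 p.2)⟩ :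
          {s : Equiv.Perm (Fin m) // Avoids321 s})) := by
    intro p p' h
    rw [Subtype.mk.injEq] at h
    have hA : Adef p.1 (n := m) = Adef p'.1 (n := m) := by
      rw [← excSet_permOf (decode_card p.1 p.2) (decode_dom p.1 p.2),
        ← excSet_permOf (decode_card p'.1 p'.2) (decode_dom p'.1 p'.2), h]
    have hB : Bdef p.1 (n := m) = Bdef p'.1 (n := m) := by
      rw [← valSet_permOf (decode_card p.1 p.2) (decode_dom p.1 p.2),
        ← valSet_permOf (decode_card p'.1 p'.2) (decode_dom p'.1 p'.2), h]
    apply Subtype.ext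
    apply DyckWord.ext
    rw [decode_toList p.1 p.2, decode_toList p'.1 p'.2, hA, hB]
  have key : Nat.card {s : Equiv.Perm (Fin m) // Avoids321 s}
      = Nat.card {p : DyckWord // p.semilength = m} :=
    le_antisymm (Nat.card_le_card_of_injective _ hFinj)
      (Nat.card_le_card_of_injective _ hGinj)
  have h1 : {s : Equiv.Perm (Fin m) | Avoids321 s}.ncard
      = Nat.card {s : Equiv.Perm (Fin m) // Avoids321 s} :=
    (Nat.card_coe_set_eq _).symm
  rw [h1, key, Nat.card_eq_fintype_card, DyckWord.card_dyckWord_semilength_eq_catalan,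
    catalan_eq_centralBinom_div, Nat.centralBinom_eq_two_mul_choose]
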